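/- Let ξ : ℝ → ℝ be a function satisfying ξ(t + 2π) = ξ(t) + 2π for all t ∈ ℝ, and for α, t ∈ ℝ set γ(α, t) = ξ(α + t) − ξ(t). Then for every r ∈ (0,1), ∫₀^{2π} ∫₀^{2π} 𝒦_r(α) · (γ(α,t) − α) · cos α dα dt = 0, where 𝒦_r(u) = 2r²(1 − r⁴) sin u / (1 − 2r² cos u + r⁴)². -/

import Mathlib

open Real MeasureTheory intervalIntegral Set

/-- The kernel `𝒦_r`. -/
noncomputable def kerK (r u : ℝ) : ℝ :=
  2 * r ^ 2 * (1 - r ^ 4) * Real.sin u / (1 - 2 * r ^ 2 * Real.cos u + r ^ 4) ^ 2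

lemma pc_denom_pos {r : ℝ} (hr0 : 0 < r) (hr1 : r < 1) (u : ℝ) :
    0 < 1 - 2 * r ^ 2 * Real.cos u + r ^ 4 := by
  have h2 : r ^ 2 < 1 := by nlinarith
  nlinarith [Real.cos_le_one u, sq_nonneg (1 - r ^ 2), sq_nonneg r]

lemma pc_cont {r : ℝ} (hr0 : 0 < r) (hr1 : r < 1) :
    Continuous (fun u => kerK r u * Real.cos u) := by
  apply Continuous.mul _ Real.continuous_cos
  unfold kerK
  apply Continuous.div (by continuity) (by continuity)
  intro u
  exact pow_ne_zero 2 (ne_of_gt (pc_denom_pos hr0 hr1 u))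

lemma pc_periodic {r : ℝ} : Function.Periodic (fun u => kerK r u * Real.cos u) (2 * π) := by
  intro u
  simp [kerK, Real.sin_add_two_pi, Real.cos_add_two_pi]

lemma pc_odd {r : ℝ} (α : ℝ) :
    kerK r (2 * π - α) * Real.cos (2 * π - α) = -(kerK r α * Real.cos α) := by
  simp [kerK, Real.sin_two_pi_sub, Real.cos_two_pi_sub, neg_div]

lemma pc_zero {r : ℝ} (hr0 : 0 < r) (hr1 : r < 1) {α : ℝ}
    (h : kerK r α * Real.cos α = 0) : ∃ n : ℤ, α = n * (π / 2) := by
  have hd := pc_denom_pos hr0 hr1 α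
  have hc : 2 * r ^ 2 * (1 - r ^ 4) ≠ 0 := by
    have h4 : r ^ 4 < 1 := pow_lt_one₀ (le_of_lt hr0) hr1 (by norm_num)
    have h5 : (0:ℝ) < 1 - r ^ 4 := by linarith
    have : (0:ℝ) < 2 * r ^ 2 * (1 - r ^ 4) := by positivity
    exact ne_of_gt this
  have hsc : Real.sin α * Real.cos α = 0 := by
    rcases mul_eq_zero.1 h with h1 | h2
    · unfold kerK at h1
      have := (div_eq_zero_iff.1 h1).resolve_right (pow_ne_zero 2 (ne_of_gt hd))
      rcases mul_eq_zero.1 this with h3 | h4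
      · exact absurd h3 hc
      · simp [h4]
    · simp [h2]
  have h2 : Real.sin (2 * α) = 0 := by rw [Real.sin_two_mul]; linarith [hsc]
  rw [Real.sin_eq_zero_iff] at h2
  obtain ⟨n, hn⟩ := h2
  exact ⟨n, by push_cast at hn ⊢; linarith⟩

lemma pc_min {f : ℝ → ℝ} (hf : Continuous f) (hp : Function.Periodic f (2 * π)) :
    ∃ x₀ ∈ Set.Icc (0:ℝ) (2 * π), ∀ x, f x₀ ≤ f x := by
  obtain ⟨x₀, hx₀, hmin⟩ := (isCompact_Icc (a := (0:ℝ)) (b := 2 * π)).exists_isMinOn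
    (Set.nonempty_Icc.2 (by linarith [Real.pi_pos])) hf.continuousOn
  refine ⟨x₀, hx₀, fun x => ?_⟩
  obtain ⟨y, hy, hxy⟩ := hp.exists_mem_Ico₀ (by linarith [Real.pi_pos]) x
  rw [hxy]; exact hmin (Set.mem_Icc_of_Ico hy)

lemma pc_bound {f : ℝ → ℝ} (hf : Continuous f) (hp : Function.Periodic f (2 * π)) :
    ∃ C : ℝ, ∀ x, |f x| ≤ C := by
  obtain ⟨x₀, _, hmin⟩ := pc_min (f := fun x => -|f x|) (by fun_prop) (fun x => by simp [hp x])
  exact ⟨|f x₀|, fun x => by have := hmin x; simp at this; linarith⟩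

lemma pc_G_zero {r : ℝ} : ∫ α in (0:ℝ)..(2 * π), kerK r α * Real.cos α = 0 := by
  have h := intervalIntegral.integral_comp_sub_left (a := (0:ℝ)) (b := 2 * π)
    (fun x => kerK r x * Real.cos x) (2 * π)
  simp only [pc_odd, intervalIntegral.integral_neg, sub_self, sub_zero] at h
  linarith

lemma pc_shift_zero {r : ℝ} (s : ℝ) :
    ∫ t in (0:ℝ)..(2 * π), kerK r (s - t) * Real.cos (s - t) = 0 := by
  have h := intervalIntegral.integral_comp_sub_left (a := (0:ℝ)) (b := 2 * π)
    (fun x => kerK r x * Real.cos x) s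
  rw [sub_zero] at h
  rw [h]
  have h2 := (pc_periodic (r := r)).intervalIntegral_add_eq (s - 2 * π) 0
  simp only [sub_add_cancel, zero_add] at h2
  rw [h2, pc_G_zero]

lemma pc_per_ii {f : ℝ → ℝ} (hp : Function.Periodic f (2 * π))
    (h0 : IntervalIntegrable f volume 0 (2 * π)) (a b : ℝ) :
    IntervalIntegrable f volume a b := by
  have hπ : (0:ℝ) < 2 * π := by linarith [Real.pi_pos]
  have key : ∀ n : ℤ, IntervalIntegrable f volume (n * (2 * π)) ((n + 1) * (2 * π)) := by
    intro n
    have h1 := h0.comp_add_right (-(n * (2 * π)))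
    have heq : (fun x => f (x + -(↑n * (2 * π)))) = f :=
      funext fun x => by rw [← sub_eq_add_neg]; exact hp.sub_int_mul_eq n
    rw [heq] at h1
    convert h1 using 1 <;> ring
  have h2 : ∀ n : ℕ, IntervalIntegrable f volume (-(n * (2 * π))) (n * (2 * π)) := by
    intro n
    induction n with
    | zero => simp
    | succ n ih =>
      push_cast
      push_cast at ih
      have hl : IntervalIntegrable f volume (-(((n:ℝ)+1) * (2 * π))) (-((n:ℝ) * (2 * π))) := by
        have h3 := key (-(n+1))
        convert h3 using 1 <;> push_cast <;> ring
      have hr : IntervalIntegrable f volume ((n:ℝ) * (2 * π)) (((n:ℝ)+1) * (2 * π)) := by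
        have h3 := key n
        convert h3 using 1 <;> push_cast <;> ring
      exact (hl.trans ih).trans hr
  obtain ⟨N, hN⟩ := exists_nat_gt (max |a| |b| / (2 * π))
  have hN' : max |a| |b| ≤ N * (2 * π) := by
    rw [div_lt_iff₀ hπ] at hN; linarith
  have hNn : -((N:ℝ) * (2 * π)) ≤ N * (2 * π) := by nlinarith [hπ, Nat.cast_nonneg (α := ℝ) N]
  refine (h2 N).mono_set (Set.uIcc_subset_uIcc ?_ ?_) <;>
    rw [Set.uIcc_of_le hNn] <;> constructor
  · linarith [neg_abs_le a, le_max_left |a| |b|]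
  · linarith [le_abs_self a, le_max_left |a| |b|]
  · linarith [neg_abs_le b, le_max_right |a| |b|]
  · linarith [le_abs_self b, le_max_right |a| |b|]

lemma pc_per_ii' {f : ℝ → ℝ} (hp : Function.Periodic f (2 * π)) {a : ℝ}
    (h0 : IntervalIntegrable f volume a (a + 2 * π)) (c d : ℝ) :
    IntervalIntegrable f volume c d := by
  have h1 : IntervalIntegrable (fun x => f (x + a)) volume 0 (2 * π) := by
    have := h0.comp_add_right a
    convert this using 1 <;> ring
  have hp' : Function.Periodic (fun x => f (x + a)) (2 * π) := fun x => by
    simp only [show x + 2 * π + a = x + a + 2 * π by ring, hp (x + a)]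
  have h2 := (pc_per_ii hp' h1 (c - a) (d - a)).comp_sub_right a
  have heq : (fun x => (fun y => f (y + a)) (x - a)) = f := funext fun x => by
    simp [sub_add_cancel]
  rw [heq] at h2
  convert h2 using 1 <;> ring

set_option maxHeartbeats 1000000 in
theorem periodic_cancellation
    (ξ : ℝ → ℝ) (hξ : ∀ t : ℝ, ξ (t + 2 * Real.pi) = ξ t + 2 * Real.pi)
    (r : ℝ) (hr0 : 0 < r) (hr1 : r < 1) :
    ∫ t in (0 : ℝ)..(2 * Real.pi),
        ∫ α in (0 : ℝ)..(2 * Real.pi),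
          kerK r α * (ξ (α + t) - ξ t - α) * Real.cos α
      = 0 := by
  have hπ : (0:ℝ) < 2 * π := by linarith [Real.pi_pos]
  set ζ : ℝ → ℝ := fun s => ξ s - s with hζd
  set g : ℝ → ℝ := fun α => kerK r α * Real.cos α with hgd
  have hζp : Function.Periodic ζ (2 * π) := fun s => by
    simp only [hζd]; rw [hξ s]; ring
  have hgp : Function.Periodic g (2 * π) := pc_periodic
  have hgc : Continuous g := pc_cont hr0 hr1
  have hrw : ∀ t α, kerK r α * (ξ (α + t) - ξ t - α) * Real.cos α
      = g α * (ζ (α + t) - ζ t) := fun t α => by simp only [hζd, hgd]; ring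
  simp only [hrw]
  have hG : (∫ α in (0:ℝ)..(2 * π), g α) = 0 := pc_G_zero
  have hFp : ∀ t, Function.Periodic (fun s => g (s - t) * ζ s) (2 * π) := fun t s => by
      simp only [show s + 2 * π - t = s - t + 2 * π by ring, hgp (s - t), hζp s]
  by_cases hA : IntegrableOn ζ (Set.Ioc 0 (2 * π)) volume
  · -- integrable case
    have hζii : ∀ a b, IntervalIntegrable ζ volume a b :=
      pc_per_ii hζp ((intervalIntegrable_iff_integrableOn_Ioc_of_le hπ.le).2 hA)
    have hstep : ∀ t, (∫ α in (0:ℝ)..(2 * π), g α * (ζ (α + t) - ζ t))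
        = ∫ s in (0:ℝ)..(2 * π), g (s - t) * ζ s := by
      intro t
      have h1 : IntervalIntegrable (fun α => g α * ζ (α + t)) volume 0 (2 * π) := by
        have h1a := (hζii t (2 * π + t)).comp_add_right t
        have h1b : IntervalIntegrable (fun x => ζ (x + t)) volume 0 (2 * π) := by
          convert h1a using 1 <;> ring
        exact h1b.continuousOn_mul hgc.continuousOn
      have h2 : IntervalIntegrable (fun α => g α * ζ t) volume 0 (2 * π) :=
        (hgc.mul continuous_const).intervalIntegrable 0 (2 * π)
      have h3 : (∫ α in (0:ℝ)..(2 * π), g α * (ζ (α + t) - ζ t))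
          = (∫ α in (0:ℝ)..(2 * π), g α * ζ (α + t))
            - ∫ α in (0:ℝ)..(2 * π), g α * ζ t := by
        rw [← intervalIntegral.integral_sub h1 h2]
        congr 1; funext α; ring
      have h4 : (∫ α in (0:ℝ)..(2 * π), g α * ζ t)
          = (∫ α in (0:ℝ)..(2 * π), g α) * ζ t :=
        intervalIntegral.integral_mul_const _ _
      have h5 : (∫ α in (0:ℝ)..(2 * π), g α * ζ (α + t))
          = ∫ s in t..(t + 2 * π), g (s - t) * ζ s := by
        have h5a := intervalIntegral.integral_comp_add_right (a := (0:ℝ)) (b := 2 * π)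
          (fun s => g (s - t) * ζ s) t
        simp only [add_sub_cancel_right] at h5a
        rw [h5a]
        congr 1 <;> ring
      have h6 := (hFp t).intervalIntegral_add_eq t 0
      rw [h3, h4, hG, h5, h6, zero_add, zero_mul, sub_zero]
    rw [intervalIntegral.integral_congr (g := fun t => ∫ s in (0:ℝ)..(2 * π), g (s - t) * ζ s)
      (fun t _ => hstep t)]
    -- convert to set integrals and swap
    have hζsm : AEStronglyMeasurable ζ (volume.restrict (Set.Ioc 0 (2 * π))) :=
      hA.aestronglyMeasurable
    obtain ⟨C, hC⟩ := pc_bound hgc hgp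
    have hprod : Integrable (Function.uncurry fun t s => g (s - t) * ζ s)
        ((volume.restrict (Set.Ioc 0 (2 * π))).prod (volume.restrict (Set.Ioc 0 (2 * π)))) := by
      have hsm : AEStronglyMeasurable (fun p : ℝ × ℝ => g (p.2 - p.1) * ζ p.2)
          ((volume.restrict (Set.Ioc 0 (2 * π))).prod (volume.restrict (Set.Ioc 0 (2 * π)))) :=
        ((hgc.comp (continuous_snd.sub continuous_fst)).aestronglyMeasurable).mul hζsm.comp_snd
      have hζ2 : Integrable (fun p : ℝ × ℝ => ζ p.2)
          ((volume.restrict (Set.Ioc 0 (2 * π))).prod (volume.restrict (Set.Ioc 0 (2 * π)))) := by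
        rw [MeasureTheory.integrable_prod_iff hζsm.comp_snd]
        constructor
        · exact Filter.Eventually.of_forall fun x => hA
        · simpa using integrable_const (μ := volume.restrict (Set.Ioc (0:ℝ) (2 * π)))
            (∫ y in Set.Ioc (0:ℝ) (2 * π), ‖ζ y‖)
      refine (hζ2.norm.const_mul C).mono' hsm ?_
      refine Filter.Eventually.of_forall fun p => ?_
      simp only [Function.uncurry, norm_mul, Real.norm_eq_abs]
      exact mul_le_mul (hC _) le_rfl (abs_nonneg _) ((abs_nonneg _).trans (hC 0))
    rw [intervalIntegral.integral_of_le hπ.le]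
    simp only [intervalIntegral.integral_of_le hπ.le]
    rw [MeasureTheory.integral_integral_swap hprod]
    have hinner : ∀ s, (∫ t in Set.Ioc (0:ℝ) (2 * π), g (s - t) * ζ s) = 0 := by
      intro s
      have h7 : (∫ t in Set.Ioc (0:ℝ) (2 * π), g (s - t) * ζ s)
          = (∫ t in (0:ℝ)..(2 * π), g (s - t)) * ζ s := by
        rw [← intervalIntegral.integral_mul_const, intervalIntegral.integral_of_le hπ.le]
      rw [h7, pc_shift_zero s, zero_mul]
    simp only [hinner, MeasureTheory.integral_zero]
  · -- non-integrable case
    set T : Set ℝ :=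
      {t : ℝ | IntervalIntegrable (fun α => g α * (ζ (α + t) - ζ t)) volume 0 (2 * π)} with hTd
    have hkey : ∀ t ∈ T,
        IntegrableOn (fun s => g (s - t) * ζ s) (Set.Ioc 0 (2 * π)) volume := by
      intro t ht
      simp only [hTd, Set.mem_setOf_eq] at ht
      have h2 : IntervalIntegrable (fun α => g α * ζ t) volume 0 (2 * π) :=
        (hgc.mul continuous_const).intervalIntegrable 0 (2 * π)
      have h3 := ht.add h2
      have heq : (fun α => g α * (ζ (α + t) - ζ t) + g α * ζ t) = fun α => g α * ζ (α + t) :=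
        funext fun α => by ring
      rw [heq] at h3
      have h4 : IntervalIntegrable (fun s => g (s - t) * ζ s) volume t (t + 2 * π) := by
        have h5 := h3.comp_sub_right t
        have heq2 : (fun x => (fun α => g α * ζ (α + t)) (x - t)) = fun s => g (s - t) * ζ s :=
          funext fun x => by simp [sub_add_cancel]
        rw [heq2] at h5
        convert h5 using 1 <;> ring
      exact (intervalIntegrable_iff_integrableOn_Ioc_of_le hπ.le).1
        (pc_per_ii' (hFp t) h4 0 (2 * π))
    have hsm : ∀ t ∈ T, AEStronglyMeasurable ζ (volume.restrict (Set.Ioc (0:ℝ) (2 * π))) := by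
      intro t ht
      have hF := (hkey t ht).aestronglyMeasurable
      have hnull : volume {s : ℝ | g (s - t) = 0} = 0 := by
        refine measure_mono_null (fun s hs => ?_)
          ((Set.countable_range fun n : ℤ => t + n * (π / 2)).measure_zero _)
        obtain ⟨n, hn⟩ := pc_zero hr0 hr1 (show kerK r (s - t) * Real.cos (s - t) = 0 from hs)
        exact ⟨n, by dsimp only; linarith⟩
      have hg0 : ∀ᵐ s ∂(volume.restrict (Set.Ioc (0:ℝ) (2 * π))), g (s - t) ≠ 0 := by
        apply ae_restrict_of_ae
        rw [MeasureTheory.ae_iff]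
        simpa using hnull
      have haesm2 : AEStronglyMeasurable (fun s => (g (s - t))⁻¹ * (g (s - t) * ζ s))
          (volume.restrict (Set.Ioc (0:ℝ) (2 * π))) :=
        ((hgc.comp (continuous_id.sub continuous_const)).measurable.inv.aestronglyMeasurable).mul hF
      exact haesm2.congr (hg0.mono fun s hs => by dsimp only; rw [inv_mul_cancel_left₀ hs])
    have hT0 : volume T = 0 := by
      by_cases hcong : ∀ t₁ ∈ T, ∀ t₂ ∈ T, ∃ n : ℤ, t₁ - t₂ = n * (π / 2)
      · rcases Set.eq_empty_or_nonempty T with hE | ⟨t₀, ht₀⟩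
        · simp [hE]
        · refine measure_mono_null (fun t ht => ?_)
            ((Set.countable_range fun n : ℤ => t₀ + n * (π / 2)).measure_zero _)
          obtain ⟨n, hn⟩ := hcong t ht t₀ ht₀
          exact ⟨n, by dsimp only; linarith⟩
      · exfalso
        push_neg at hcong
        obtain ⟨t₁, ht₁, t₂, ht₂, hne⟩ := hcong
        set W : ℝ → ℝ := fun s => |g (s - t₁)| + |g (s - t₂)| with hWd
        have hWc : Continuous W := by
          apply Continuous.add <;> exact (hgc.comp (continuous_id.sub continuous_const)).abs
        have hWp : Function.Periodic W (2 * π) := fun s => by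
          simp only [hWd, show s + 2 * π - t₁ = s - t₁ + 2 * π by ring,
            show s + 2 * π - t₂ = s - t₂ + 2 * π by ring, hgp (s - t₁), hgp (s - t₂)]
        obtain ⟨x₀, _, hmin⟩ := pc_min hWc hWp
        have hc0 : 0 < W x₀ := by
          rcases lt_or_eq_of_le (show (0:ℝ) ≤ W x₀ from by positivity) with h | h
          · exact h
          · exfalso
            have hz1 : g (x₀ - t₁) = 0 := by
              have := abs_nonneg (g (x₀ - t₁)); have := abs_nonneg (g (x₀ - t₂))
              have hW0 : |g (x₀ - t₁)| = 0 := by simp only [hWd] at h; linarith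
              exact abs_eq_zero.1 hW0
            have hz2 : g (x₀ - t₂) = 0 := by
              have := abs_nonneg (g (x₀ - t₁)); have := abs_nonneg (g (x₀ - t₂))
              have hW0 : |g (x₀ - t₂)| = 0 := by simp only [hWd] at h; linarith
              exact abs_eq_zero.1 hW0
            obtain ⟨n, hn⟩ := pc_zero hr0 hr1 (show kerK r (x₀ - t₁) * Real.cos (x₀ - t₁) = 0 from hz1)
            obtain ⟨m, hm⟩ := pc_zero hr0 hr1 (show kerK r (x₀ - t₂) * Real.cos (x₀ - t₂) = 0 from hz2)
            refine hne (m - n) ?_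
            push_cast
            linarith
        apply hA
        have hdom : IntegrableOn
            (fun s => (W x₀)⁻¹ * (‖g (s - t₁) * ζ s‖ + ‖g (s - t₂) * ζ s‖))
            (Set.Ioc 0 (2 * π)) volume :=
          ((hkey t₁ ht₁).norm.add (hkey t₂ ht₂).norm).const_mul _
        refine Integrable.mono' hdom (hsm t₁ ht₁) ?_
        refine Filter.Eventually.of_forall fun s => ?_
        have hWs := hmin s
        simp only [hWd] at hWs
        simp only [Real.norm_eq_abs, abs_mul]
        rw [le_inv_mul_iff₀ hc0]
        calc W x₀ * |ζ s| ≤ (|g (s - t₁)| + |g (s - t₂)|) * |ζ s| :=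
              mul_le_mul_of_nonneg_right hWs (abs_nonneg _)
          _ = |g (s - t₁)| * |ζ s| + |g (s - t₂)| * |ζ s| := by ring
    rw [intervalIntegral.integral_of_le hπ.le]
    apply MeasureTheory.integral_eq_zero_of_ae
    have hae : ∀ᵐ t ∂(volume.restrict (Set.Ioc (0:ℝ) (2 * π))), t ∉ T :=
      Filter.Eventually.filter_mono (MeasureTheory.ae_mono Measure.restrict_le_self)
        ((MeasureTheory.measure_eq_zero_iff_ae_notMem.1 hT0))
    refine hae.mono fun t ht => ?_
    have : ¬ IntervalIntegrable (fun α => g α * (ζ (α + t) - ζ t)) volume 0 (2 * π) := ht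
    simp only [Pi.zero_apply]
    exact intervalIntegral.integral_undef this
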